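/- Let β ∈ (0, 1/3), set c = cos(2πβ) (so c > −1/2), and let n ∈ ℕ. Then the limit, as ω → ωₙ* with ω ∈ Ĩⁿ(β) and ω ≠ ωₙ*, of (r_β(ω) + 1/√(2 + 2c)) / cos²(ωL) equals −9/((1 + 2c)·√(2 + 2c)). (First-order Taylor expansion of the contraction factor r_β at the Dirac frequency ωₙ*.) -/

import Mathlib

open Real Filter Topology

/-- The edge length `L = 1/√3`. -/
noncomputable def L : ℝ := 1 / Real.sqrt 3

/-- The Dirac frequency `ωₙ* = (2n+1)π/(2L)`. -/
noncomputable def ωstar (n : ℕ) : ℝ := (2 * n + 1) * π / (2 * L)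

/-- `g_β(ω) = (9·cos²(ωL) − 3 − 2·cos(2πβ)) / √(2 + 2·cos(2πβ))`. -/
noncomputable def g (β ω : ℝ) : ℝ :=
  (9 * Real.cos (ω * L) ^ 2 - 3 - 2 * Real.cos (2 * π * β)) /
    Real.sqrt (2 + 2 * Real.cos (2 * π * β))

/-- `a(β) = arccos(√(3 + 2·cos(2πβ) − 2·√(2 + 2·cos(2πβ)))/3)`. -/
noncomputable def aβ (β : ℝ) : ℝ :=
  Real.arccos (Real.sqrt (3 + 2 * Real.cos (2 * π * β) -
    2 * Real.sqrt (2 + 2 * Real.cos (2 * π * β))) / 3)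

/-- The open interval `Ĩⁿ(β) = (nπ/L + a(β)/L, (n+1)π/L − a(β)/L)`. -/
noncomputable def Itilde (β : ℝ) (n : ℕ) : Set ℝ :=
  Set.Ioo (n * π / L + aβ β / L) ((n + 1) * π / L - aβ β / L)

/-- `r_β(ω) = (g_β(ω) + √(g_β(ω)² − 4))/2`. -/
noncomputable def r (β ω : ℝ) : ℝ := (g β ω + Real.sqrt (g β ω ^ 2 - 4)) / 2

set_option maxHeartbeats 800000 in
theorem stmt_14 (β : ℝ) (hβ0 : 0 < β) (hβ1 : β < 1 / 3) (n : ℕ) :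
    Tendsto
      (fun ω : ℝ =>
        (r β ω + 1 / Real.sqrt (2 + 2 * Real.cos (2 * π * β))) / Real.cos (ω * L) ^ 2)
      (𝓝[Itilde β n \ {ωstar n}] (ωstar n))
      (𝓝 (-9 / ((1 + 2 * Real.cos (2 * π * β)) *
        Real.sqrt (2 + 2 * Real.cos (2 * π * β))))) := by
  have hπ := Real.pi_pos
  have hL : (0:ℝ) < L := by
    unfold L
    positivity
  set c : ℝ := Real.cos (2 * π * β) with hc_def
  -- basic facts about c and s
  have hc : -(1/2) < c := by
    have h23 : Real.cos (2*π/3) = -(1/2) := by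
      rw [show (2*π/3 : ℝ) = π - π/3 by ring, Real.cos_pi_sub, Real.cos_pi_div_three]
    have := Real.cos_lt_cos_of_nonneg_of_le_pi (x := 2*π*β) (y := 2*π/3)
      (by positivity) (by linarith) (by nlinarith)
    rw [h23] at this
    linarith [this]
  set s : ℝ := Real.sqrt (2 + 2 * c) with hs_def
  have h2c : (0:ℝ) < 2 + 2*c := by linarith
  have h1c : (0:ℝ) < 1 + 2*c := by linarith
  have hs2 : s^2 = 2 + 2*c := Real.sq_sqrt (le_of_lt h2c)
  have hs : (0:ℝ) < s := Real.sqrt_pos.mpr h2c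
  have hsne : s ≠ 0 := ne_of_gt hs
  -- the auxiliary one-variable function
  set F : ℝ → ℝ := fun t => ((9*t - 3 - 2*c)/s + Real.sqrt (((9*t - 3 - 2*c)/s)^2 - 4))/2
    with hF_def
  have hq0 : ((9*(0:ℝ) - 3 - 2*c)/s)^2 - 4 = ((1+2*c)/s)^2 := by
    field_simp
    nlinarith [hs2]
  have hsq0 : Real.sqrt (((9*(0:ℝ) - 3 - 2*c)/s)^2 - 4) = (1+2*c)/s := by
    rw [hq0, Real.sqrt_sq (by positivity)]
  have hq0pos : (0:ℝ) < ((9*(0:ℝ) - 3 - 2*c)/s)^2 - 4 := by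
    rw [hq0]; positivity
  have hF0 : F 0 = -(1/s) := by
    simp only [hF_def, hsq0]
    field_simp
    ring
  -- derivative of F at 0
  have hG : HasDerivAt (fun t:ℝ => (9*t - 3 - 2*c)/s) (9/s) 0 := by
    have := ((((hasDerivAt_id (0:ℝ)).const_mul 9).sub_const 3).sub_const (2*c)).div_const s
    simpa using this
  have hq : HasDerivAt (fun t:ℝ => ((9*t - 3 - 2*c)/s)^2 - 4)
      (2 * ((9*(0:ℝ) - 3 - 2*c)/s)^(2-1) * (9/s)) 0 := (hG.pow 2).sub_const 4
  have hsqrt : HasDerivAt (fun t:ℝ => Real.sqrt (((9*t - 3 - 2*c)/s)^2 - 4))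
      (1 / (2 * Real.sqrt (((9*(0:ℝ) - 3 - 2*c)/s)^2 - 4)) *
        (2 * ((9*(0:ℝ) - 3 - 2*c)/s)^(2-1) * (9/s))) 0 := by
    exact (Real.hasDerivAt_sqrt (ne_of_gt hq0pos)).comp 0 hq
  have hF : HasDerivAt F (-9 / ((1 + 2*c) * s)) 0 := by
    have h := (hG.add hsqrt).div_const 2
    refine h.congr_deriv ?_
    symm
    rw [hsq0]
    have h1c' : (1:ℝ) + 2*c ≠ 0 := ne_of_gt h1c
    norm_num
    rw [div_eq_div_iff (by positivity) (by norm_num)]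
    field_simp
    ring
  -- the inner map tends to 𝓝[≠] 0
  have hcosstar : Real.cos (ωstar n * L) = 0 := by
    have hLne : L ≠ 0 := ne_of_gt hL
    have : ωstar n * L = (2*(n:ℝ)+1)*π/2 := by
      unfold ωstar; field_simp
    rw [this, Real.cos_eq_zero_iff]
    exact ⟨n, by push_cast; ring⟩
  have hmem : ∀ ω ∈ Itilde β n \ {ωstar n}, Real.cos (ω * L) ^ 2 ≠ 0 := by
    rintro ω ⟨hω, hωne⟩
    have ha : 0 ≤ aβ β := Real.arccos_nonneg _
    have h' : 0 ≤ aβ β / L := div_nonneg ha hL.le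
    simp only [Itilde, Set.mem_Ioo] at hω
    have h1 : (n:ℝ)*π/L < ω := by linarith [hω.1]
    have h2 : ω < ((n:ℝ)+1)*π/L := by linarith [hω.2]
    have hl : (n:ℝ)*π < ω*L := by
      rw [div_lt_iff₀ hL] at h1; linarith
    have hr : ω*L < ((n:ℝ)+1)*π := by
      rw [lt_div_iff₀ hL] at h2; linarith
    intro hcos
    have hcos' : Real.cos (ω*L) = 0 := by
      exact pow_eq_zero_iff (n := 2) (by norm_num) |>.mp hcos
    rw [Real.cos_eq_zero_iff] at hcos'
    obtain ⟨k, hk⟩ := hcos'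
    rw [hk] at hl hr
    have hk1 : (2*(n:ℝ))*π < (2*(k:ℝ)+1)*π := by linarith
    have hk2 : (2*(k:ℝ)+1)*π < (2*(n:ℝ)+2)*π := by linarith
    have hk1r : (2*(n:ℝ)) < 2*(k:ℝ)+1 := lt_of_mul_lt_mul_right hk1 hπ.le
    have hk2r : (2*(k:ℝ)+1) < 2*(n:ℝ)+2 := lt_of_mul_lt_mul_right hk2 hπ.le
    have hk1' : (2*(n:ℤ)) < 2*k+1 := by exact_mod_cast hk1r
    have hk2' : (2*(k:ℤ)+1) < 2*(n:ℤ)+2 := by exact_mod_cast hk2r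
    have hkn : k = (n:ℤ) := by omega
    apply hωne
    have hLne : L ≠ 0 := ne_of_gt hL
    have : ω * L = ωstar n * L := by
      rw [hk, hkn]
      unfold ωstar; field_simp; push_cast; ring
    simp only [Set.mem_singleton_iff]
    exact mul_right_cancel₀ hLne this
  have htend0 : Tendsto (fun ω : ℝ => Real.cos (ω*L)^2)
      (𝓝[Itilde β n \ {ωstar n}] (ωstar n)) (𝓝[≠] 0) := by
    rw [tendsto_nhdsWithin_iff]
    constructor
    · have hcont : Continuous (fun ω : ℝ => Real.cos (ω*L)^2) := by
        exact (Real.continuous_cos.comp (continuous_id.mul continuous_const)).pow 2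
      have := hcont.tendsto (ωstar n)
      rw [hcosstar] at this
      simpa using this.mono_left nhdsWithin_le_nhds
    · exact eventually_mem_nhdsWithin.mono (fun ω hω => hmem ω hω)
  -- slope limit
  have hslope : Tendsto (slope F 0) (𝓝[≠] 0) (𝓝 (-9 / ((1 + 2*c) * s))) :=
    hasDerivAt_iff_tendsto_slope.mp hF
  have hcomp := hslope.comp htend0
  refine hcomp.congr' ?_
  filter_upwards [eventually_mem_nhdsWithin] with ω hω
  have hne := hmem ω hω
  simp only [Function.comp_apply, slope_def_field, hF0]
  have hFval : F (Real.cos (ω*L)^2) = r β ω := by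
    simp only [hF_def, r, g, hc_def, hs_def]
  rw [hFval]
  rw [sub_zero]
  congr 1
  ring
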